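/- arXiv:2511.21455 — 3 statements merged into one kernel-verified Lean document; each statement's English description precedes it below -/
import Mathlib

section
/- For all complex numbers z, w, the limit as n → ∞ of (1/n) Σ_{k=0}^n ((1 + z/n)(1 + w̄/n))^k equals ∫₀¹ e^{t(z + w̄)} dt. -/
open Finset Filter Complex

noncomputable def Flog : ℂ → ℂ := fun x => if x = 1 then 1 else Complex.log x / (x - 1)
noncomputable def Gexp : ℂ → ℂ := fun u => if u = 0 then 1 else (Complex.exp u - 1) / u

lemma tendsto_Flog : Tendsto Flog (nhds 1) (nhds 1) := by
  nth_rewrite 1 [← nhdsNE_sup_pure]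
  refine Tendsto.sup ?_ ?_
  · have h1 : Tendsto (slope Complex.log 1) (nhdsWithin 1 {(1:ℂ)}ᶜ) (nhds 1) := by
      have := Complex.hasDerivAt_log (z := 1) one_mem_slitPlane
      simpa using hasDerivAt_iff_tendsto_slope.mp this
    refine h1.congr' ?_
    filter_upwards [eventually_mem_nhdsWithin] with x hx
    simp only [Set.mem_compl_iff, Set.mem_singleton_iff] at hx
    simp [slope_def_field, Flog, hx, Complex.log_one, div_eq_div_iff]
  · have : Flog 1 = 1 := by simp [Flog]
    simpa [this] using tendsto_pure_nhds Flog 1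

lemma tendsto_Gexp : Tendsto Gexp (nhds 0) (nhds 1) := by
  rw [← nhdsNE_sup_pure]
  refine Tendsto.sup ?_ ?_
  · have h1 : Tendsto (slope Complex.exp 0) (nhdsWithin 0 {(0:ℂ)}ᶜ) (nhds 1) := by
      have := Complex.hasDerivAt_exp 0
      simpa using hasDerivAt_iff_tendsto_slope.mp this
    refine h1.congr' ?_
    filter_upwards [eventually_mem_nhdsWithin] with x hx
    simp only [Set.mem_compl_iff, Set.mem_singleton_iff] at hx
    simp [slope_def_field, Gexp, hx]
  · have : Gexp 0 = 1 := by simp [Gexp]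
    simpa [this] using tendsto_pure_nhds Gexp 0

lemma tendsto_inv_natCast_complex {e : ℕ → ℕ} (he : Tendsto e atTop atTop) :
    Tendsto (fun n => ((e n : ℂ))⁻¹) atTop (nhds 0) := by
  have h1 : Tendsto (fun n => ((e n : ℝ))⁻¹) atTop (nhds 0) :=
    tendsto_inv_atTop_zero.comp (tendsto_natCast_atTop_atTop.comp he)
  have := (Complex.continuous_ofReal.tendsto 0).comp h1
  simpa [Function.comp_def] using this

lemma pow_tendsto_exp (b : ℕ → ℂ) (e : ℕ → ℕ) (c : ℂ)
    (he : Tendsto e atTop atTop)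
    (h : Tendsto (fun n => (e n : ℂ) * (b n - 1)) atTop (nhds c)) :
    Tendsto (fun n => b n ^ e n) atTop (nhds (Complex.exp c)) := by
  have hinv := tendsto_inv_natCast_complex he
  have hb1 : Tendsto b atTop (nhds 1) := by
    have : Tendsto (fun n => 1 + ((e n : ℂ))⁻¹ * ((e n : ℂ) * (b n - 1))) atTop (nhds 1) := by
      have := tendsto_const_nhds (x := (1:ℂ)) (f := atTop).add (hinv.mul h)
      simpa using this
    refine this.congr' ?_
    filter_upwards [he.eventually_gt_atTop 0] with n hn
    have hne : ((e n : ℂ)) ≠ 0 := Nat.cast_ne_zero.mpr hn.ne'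
    rw [inv_mul_cancel_left₀ hne]
    ring
  have hball : ∀ᶠ n in atTop, ‖b n - 1‖ < 1 := by
    have := hb1 (Metric.ball_mem_nhds 1 one_pos)
    filter_upwards [this] with n hn
    simpa [Complex.dist_eq] using Metric.mem_ball.mp hn
  have key : ∀ᶠ n in atTop, b n ^ e n = Complex.exp ((e n : ℂ) * (b n - 1) * Flog (b n)) := by
    filter_upwards [hball] with n hn
    have hb0 : b n ≠ 0 := by
      intro h0; rw [h0] at hn; simp at hn
    by_cases h1 : b n = 1
    · simp [h1, Flog]
    · have hFlog : Flog (b n) = Complex.log (b n) / (b n - 1) := by simp [Flog, h1]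
      rw [hFlog]
      have hne : b n - 1 ≠ 0 := sub_ne_zero.mpr h1
      have : (e n : ℂ) * (b n - 1) * (Complex.log (b n) / (b n - 1))
          = (e n : ℂ) * Complex.log (b n) := by field_simp
      rw [this, Complex.exp_nat_mul, Complex.exp_log hb0]
  have hF := tendsto_Flog.comp hb1
  have : Tendsto (fun n => Complex.exp ((e n : ℂ) * (b n - 1) * Flog (b n))) atTop
      (nhds (Complex.exp c)) := by
    have := Complex.continuous_exp.tendsto c |>.comp (by simpa using h.mul hF)
    exact this
  exact this.congr' (key.mono fun n hn => hn.symm)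

lemma mul_exp_sub_one (v u : ℕ → ℂ) (d : ℂ)
    (hu : Tendsto u atTop (nhds 0)) (h : Tendsto (fun n => v n * u n) atTop (nhds d)) :
    Tendsto (fun n => v n * (Complex.exp (u n) - 1)) atTop (nhds d) := by
  have hG := tendsto_Gexp.comp hu
  have : Tendsto (fun n => v n * u n * Gexp (u n)) atTop (nhds d) := by
    have := h.mul hG; simpa using this
  refine this.congr fun n => ?_
  by_cases h0 : u n = 0
  · simp [h0, Gexp]
  · simp only [Gexp, h0, if_neg, ↓reduceIte]
    field_simp

lemma geom_avg_tendsto (c d : ℂ) (a : ℕ → ℂ) (hcd : ¬(c = 0 ∧ d = 0))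
    (ha : ∀ n : ℕ, 1 ≤ n → a n - 1 = (c * n + d) / (n : ℂ) ^ 2)
    (ha1 : Tendsto a atTop (nhds 1)) :
    Tendsto (fun n : ℕ => (1 / (n : ℂ)) * ∑ k ∈ Finset.range (n + 1), a n ^ k) atTop
      (nhds (∫ t in (0:ℝ)..1, Complex.exp ((t : ℂ) * c))) := by
  have hinv : Tendsto (fun n : ℕ => ((n : ℂ))⁻¹) atTop (nhds 0) :=
    tendsto_inv_natCast_complex tendsto_id
  have ha0 : ∀ᶠ n : ℕ in atTop, a n ≠ 0 := by
    filter_upwards [ha1 (Metric.ball_mem_nhds 1 one_pos)] with n hn h0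
    have hd1 : dist (a n) 1 < 1 := hn
    rw [h0] at hd1
    simp [Complex.dist_eq] at hd1
  by_cases hc0 : c = 0
  · -- case c = 0, d ≠ 0
    have hd0 : d ≠ 0 := fun h => hcd ⟨hc0, h⟩
    have hane : ∀ n : ℕ, 1 ≤ n → a n ≠ 1 := by
      intro n hn h1
      have := ha n hn
      rw [h1, hc0] at this
      have hne : (n : ℂ) ≠ 0 := Nat.cast_ne_zero.mpr (by omega)
      simp only [sub_self, zero_mul, zero_add] at this
      exact hd0 (by field_simp at this; simpa using this.symm)
    have hF := tendsto_Flog.comp ha1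
    have h1 : Tendsto (fun n : ℕ => ((n + 1 : ℕ) : ℂ) * (a n - 1)) atTop (nhds 0) := by
      have base : Tendsto (fun n : ℕ => d * ((n:ℂ))⁻¹ + d * (((n:ℂ))⁻¹ * ((n:ℂ))⁻¹))
          atTop (nhds 0) := by
        have := (tendsto_const_nhds (x := d) (f := atTop (α := ℕ))).mul hinv |>.add
          ((tendsto_const_nhds (x := d) (f := atTop (α := ℕ))).mul (hinv.mul hinv))
        simpa using this
      refine base.congr' ?_
      filter_upwards [eventually_ge_atTop 1] with n hn
      have hne : (n : ℂ) ≠ 0 := Nat.cast_ne_zero.mpr (by omega)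
      rw [ha n hn, hc0]
      push_cast
      field_simp
      ring
    have hu0 : Tendsto (fun n : ℕ => ((n + 1 : ℕ) : ℂ) * Complex.log (a n)) atTop (nhds 0) := by
      have base : Tendsto (fun n : ℕ => ((n + 1 : ℕ) : ℂ) * (a n - 1) * Flog (a n))
          atTop (nhds 0) := by simpa using h1.mul hF
      refine base.congr' ?_
      filter_upwards [eventually_ge_atTop 1] with n hn
      have hne1 : a n - 1 ≠ 0 := sub_ne_zero.mpr (hane n hn)
      simp only [Flog, if_neg (hane n hn)]
      field_simp
    have hnu : Tendsto (fun n : ℕ => (n : ℂ) * (((n + 1 : ℕ) : ℂ) * Complex.log (a n)))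
        atTop (nhds d) := by
      have base : Tendsto (fun n : ℕ => ((d + d * ((n:ℂ))⁻¹) * Flog (a n)))
          atTop (nhds d) := by
        have := ((tendsto_const_nhds (x := d) (f := atTop (α := ℕ))).add
          ((tendsto_const_nhds (x := d) (f := atTop (α := ℕ))).mul hinv)).mul hF
        simpa using this
      refine base.congr' ?_
      filter_upwards [eventually_ge_atTop 1] with n hn
      have hne : (n : ℂ) ≠ 0 := Nat.cast_ne_zero.mpr (by omega)
      have hane' := hane n hn
      have hsub : a n - 1 = d / (n:ℂ)^2 := by
        rw [ha n hn, hc0]; ring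
      simp only [Flog, if_neg hane', hsub]
      push_cast
      field_simp
    have hpow : Tendsto (fun n : ℕ => (n : ℂ) * (a n ^ (n + 1) - 1)) atTop (nhds d) := by
      have hmain := mul_exp_sub_one (fun n : ℕ => (n : ℂ))
        (fun n : ℕ => ((n + 1 : ℕ) : ℂ) * Complex.log (a n)) d hu0 hnu
      refine hmain.congr' ?_
      filter_upwards [ha0] with n hn
      rw [Complex.exp_nat_mul, Complex.exp_log hn]
    have hfinal : Tendsto (fun n : ℕ => ((n : ℂ) * (a n ^ (n + 1) - 1)) * d⁻¹) atTop
        (nhds 1) := by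
      have := hpow.mul (tendsto_const_nhds (x := d⁻¹) (f := atTop (α := ℕ)))
      simpa [mul_inv_cancel₀ hd0] using this
    have hint : (∫ t in (0:ℝ)..1, Complex.exp ((t : ℂ) * c)) = 1 := by
      rw [hc0]; simp
    rw [hint]
    refine hfinal.congr' ?_
    filter_upwards [eventually_ge_atTop 1] with n hn
    have hne : (n : ℂ) ≠ 0 := Nat.cast_ne_zero.mpr (by omega)
    have hsub : a n - 1 = d / (n:ℂ)^2 := by rw [ha n hn, hc0]; ring
    rw [geom_sum_eq (hane n hn), hsub]
    field_simp
  · -- case c ≠ 0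
    have hden : Tendsto (fun n : ℕ => c + d * ((n : ℂ))⁻¹) atTop (nhds c) := by
      have := (tendsto_const_nhds (x := c) (f := atTop (α := ℕ))).add
        ((tendsto_const_nhds (x := d) (f := atTop (α := ℕ))).mul hinv)
      simpa using this
    have hden_ne : ∀ᶠ n : ℕ in atTop, c + d * ((n : ℂ))⁻¹ ≠ 0 := by
      filter_upwards [hden (isOpen_compl_singleton.mem_nhds (by simpa using hc0))] with n hn
      simpa using hn
    have hnum : Tendsto (fun n : ℕ => a n ^ (n + 1)) atTop (nhds (Complex.exp c)) := by
      apply pow_tendsto_exp a (fun n => n + 1) c (tendsto_add_atTop_nat 1)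
      have base : Tendsto
          (fun n : ℕ => c + (c + d) * ((n:ℂ))⁻¹ + d * (((n:ℂ))⁻¹ * ((n:ℂ))⁻¹))
          atTop (nhds c) := by
        have := ((tendsto_const_nhds (x := c) (f := atTop (α := ℕ))).add
          ((tendsto_const_nhds (x := c + d) (f := atTop (α := ℕ))).mul hinv)).add
          ((tendsto_const_nhds (x := d) (f := atTop (α := ℕ))).mul (hinv.mul hinv))
        simpa using this
      refine base.congr' ?_
      filter_upwards [eventually_ge_atTop 1] with n hn
      have hne : (n : ℂ) ≠ 0 := Nat.cast_ne_zero.mpr (by omega)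
      rw [ha n hn]
      push_cast
      field_simp
      ring
    have hint : (∫ t in (0:ℝ)..1, Complex.exp ((t : ℂ) * c)) = (Complex.exp c - 1) / c := by
      rw [intervalIntegral.integral_congr (g := fun t : ℝ => Complex.exp (c * t))
        (fun t _ => by rw [mul_comm]), integral_exp_mul_complex hc0]
      simp
    rw [hint]
    have hfinal : Tendsto (fun n : ℕ => (a n ^ (n + 1) - 1) / (c + d * ((n : ℂ))⁻¹)) atTop
        (nhds ((Complex.exp c - 1) / c)) :=
      (hnum.sub tendsto_const_nhds).div hden hc0
    refine hfinal.congr' ?_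
    filter_upwards [eventually_ge_atTop 1, hden_ne] with n hn hdn
    have hne : (n : ℂ) ≠ 0 := Nat.cast_ne_zero.mpr (by omega)
    have hcnd : c * n + d ≠ 0 := by
      intro h0
      apply hdn
      field_simp
      rw [mul_comm] at h0
      linear_combination h0
    have hane : a n ≠ 1 := by
      intro h1
      have := ha n hn
      rw [h1, sub_self] at this
      exact hcnd (by field_simp at this; simpa using this.symm)
    rw [geom_sum_eq hane, ha n hn]
    field_simp

/-- For all complex `z, w`, `(1/n) Σ_{k=0}^n ((1 + z/n)(1 + conj w/n))^k` converges, as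
`n → ∞`, to `∫₀¹ e^{t(z + conj w)} dt`. -/
theorem kac_covariance_limit (z w : ℂ) :
    Tendsto
      (fun n : ℕ =>
        (1 / (n : ℂ)) *
          ∑ k ∈ Finset.range (n + 1),
            ((1 + z / (n : ℂ)) * (1 + (starRingEnd ℂ) w / (n : ℂ))) ^ k)
      atTop
      (nhds (∫ t in (0:ℝ)..1, Complex.exp ((t : ℂ) * (z + (starRingEnd ℂ) w)))) := by
  have hinv : Tendsto (fun n : ℕ => ((n : ℂ))⁻¹) atTop (nhds 0) :=
    tendsto_inv_natCast_complex tendsto_id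
  by_cases hzw : z = 0 ∧ w = 0
  · obtain ⟨hz, hw⟩ := hzw
    subst hz; subst hw
    have hint : (∫ t in (0:ℝ)..1, Complex.exp ((t : ℂ) * ((0:ℂ) + (starRingEnd ℂ) 0))) = 1 := by
      simp
    rw [hint]
    have base : Tendsto (fun n : ℕ => 1 + ((n : ℂ))⁻¹) atTop (nhds 1) := by
      have := (tendsto_const_nhds (x := (1:ℂ)) (f := atTop (α := ℕ))).add hinv
      simpa using this
    refine base.congr' ?_
    filter_upwards [eventually_ge_atTop 1] with n hn
    have hne : (n : ℂ) ≠ 0 := Nat.cast_ne_zero.mpr (by omega)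
    simp only [map_zero, zero_div, add_zero, mul_one, one_pow, Finset.sum_const,
      Finset.card_range, nsmul_eq_mul]
    push_cast
    field_simp
  · apply geom_avg_tendsto (z + (starRingEnd ℂ) w) (z * (starRingEnd ℂ) w)
    · rintro ⟨h1, h2⟩
      rcases mul_eq_zero.mp h2 with h | h
      · refine hzw ⟨h, ?_⟩
        have h1' : (starRingEnd ℂ) w = 0 := by simpa [h] using h1
        simpa using congrArg (starRingEnd ℂ) h1'
      · refine hzw ⟨by simpa [h] using h1, ?_⟩
        simpa using congrArg (starRingEnd ℂ) h
    · intro n hn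
      have hne : (n : ℂ) ≠ 0 := Nat.cast_ne_zero.mpr (by omega)
      field_simp
      ring
    · have := ((tendsto_const_nhds (x := (1:ℂ)) (f := atTop (α := ℕ))).add
        ((tendsto_const_nhds (x := z) (f := atTop (α := ℕ))).mul hinv)).mul
        ((tendsto_const_nhds (x := (1:ℂ)) (f := atTop (α := ℕ))).add
        ((tendsto_const_nhds (x := (starRingEnd ℂ) w) (f := atTop (α := ℕ))).mul hinv))
      simpa [div_eq_mul_inv] using this
end

section
/- Let ξ be a non-degenerate real random variable (not almost surely constant) with characteristic function φ_ξ(t) = E[e^{itξ}]. Then there exist constants c₀ > 0 and t₀ > 0, depending only on the law of ξ, such that |φ_ξ(t)|² ≤ exp(−c₀ t²) for all |t| ≤ t₀. -/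
set_option maxHeartbeats 1000000


open MeasureTheory

lemma aux_bdd_integrable {X : Type*} [MeasurableSpace X] (ν : Measure X)
    [IsFiniteMeasure ν] (f : X → ℝ) (hf : Measurable f) (hb : ∀ x, |f x| ≤ 1) :
    Integrable f ν := by
  apply Integrable.mono' (integrable_const 1) hf.aestronglyMeasurable
  filter_upwards with x
  simpa [Real.norm_eq_abs] using hb x

/-- If `ξ` is a non-degenerate real random variable with characteristic function
`φ_ξ(t) = E[e^{itξ}]`, then there exist `c₀ > 0` and `t₀ > 0`, depending only on the law of `ξ`,
such that `|φ_ξ(t)|² ≤ exp(−c₀ t²)` for all `|t| ≤ t₀`. -/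
theorem char_fun_gaussian_decay_near_zero
    {Ω : Type*} [MeasurableSpace Ω] (P : Measure Ω) [IsProbabilityMeasure P]
    (ξ : Ω → ℝ) (hmeas : Measurable ξ)
    (hnd : ¬ ∃ c : ℝ, ∀ᵐ ω ∂P, ξ ω = c) :
    ∃ c₀ > (0:ℝ), ∃ t₀ > (0:ℝ), ∀ t : ℝ, |t| ≤ t₀ →
      (‖∫ ω, Complex.exp ((t : ℂ) * (ξ ω : ℂ) * Complex.I) ∂P‖) ^ 2
        ≤ Real.exp (-c₀ * t ^ 2) := by
  set μ : Measure (Ω × Ω) := P.prod P with hμ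
  have hD : Measurable (fun p : Ω × Ω => ξ p.1 - ξ p.2) :=
    (hmeas.comp measurable_fst).sub (hmeas.comp measurable_snd)
  -- Step 1: the difference is nonzero with positive probability
  have hne : μ {p : Ω × Ω | ξ p.1 - ξ p.2 ≠ 0} ≠ 0 := by
    intro h0
    have hae : ∀ᵐ p ∂μ, ξ p.1 = ξ p.2 := by
      have : ∀ᵐ p ∂μ, ¬ (ξ p.1 - ξ p.2 ≠ 0) := by
        rw [ae_iff]; simpa using h0
      filter_upwards [this] with p hp
      have := not_not.1 hp
      linarith
    have h2 : ∀ᵐ ω ∂P, ∀ᵐ ω' ∂P, ξ ω = ξ ω' := Measure.ae_ae_of_ae_prod hae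
    have hP : (P : Measure Ω) ≠ 0 := IsProbabilityMeasure.ne_zero P
    have : (MeasureTheory.ae P).NeBot := MeasureTheory.ae_neBot.2 hP
    obtain ⟨ω₀, hω₀⟩ := h2.exists
    exact hnd ⟨ξ ω₀, by filter_upwards [hω₀] with ω' h using h.symm⟩
  -- Step 2: find a band of positive measure
  have hcover : {p : Ω × Ω | ξ p.1 - ξ p.2 ≠ 0} ⊆
      ⋃ n : ℕ, {p : Ω × Ω | ((n:ℝ)+1)⁻¹ ≤ |ξ p.1 - ξ p.2| ∧ |ξ p.1 - ξ p.2| ≤ (n:ℝ)+1} := by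
    intro p hp
    have h1 : (0:ℝ) < |ξ p.1 - ξ p.2| := abs_pos.2 hp
    obtain ⟨n, hn⟩ := exists_nat_ge (max |ξ p.1 - ξ p.2| |ξ p.1 - ξ p.2|⁻¹)
    refine Set.mem_iUnion.2 ⟨n, ?_, ?_⟩
    · rw [inv_le_comm₀ (by positivity) h1]
      calc |ξ p.1 - ξ p.2|⁻¹ ≤ (n:ℝ) := le_trans (le_max_right _ _) hn
        _ ≤ (n:ℝ) + 1 := by linarith
    · calc |ξ p.1 - ξ p.2| ≤ (n:ℝ) := le_trans (le_max_left _ _) hn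
        _ ≤ (n:ℝ) + 1 := by linarith
  obtain ⟨n, hn⟩ : ∃ n : ℕ,
      μ {p : Ω × Ω | ((n:ℝ)+1)⁻¹ ≤ |ξ p.1 - ξ p.2| ∧ |ξ p.1 - ξ p.2| ≤ (n:ℝ)+1} ≠ 0 := by
    by_contra h
    push_neg at h
    exact hne (measure_mono_null hcover (by
      rw [measure_iUnion_null_iff]; exact fun n => h n))
  set a : ℝ := ((n:ℝ)+1)⁻¹ with ha
  set A : ℝ := (n:ℝ)+1 with hA
  have haA : a = A⁻¹ := rfl
  have hApos : (0:ℝ) < A := by positivity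
  have hapos : (0:ℝ) < a := by positivity
  set S : Set (Ω × Ω) := {p : Ω × Ω | a ≤ |ξ p.1 - ξ p.2| ∧ |ξ p.1 - ξ p.2| ≤ A} with hS
  have hSmeas : MeasurableSet S := by
    have : S = (fun p : Ω × Ω => |ξ p.1 - ξ p.2|) ⁻¹' (Set.Icc a A) := by
      ext p; simp [hS, Set.mem_Icc]
    rw [this]
    exact measurableSet_Icc.preimage hD.abs
  set ε : ℝ := (μ S).toReal with hε
  have hSfin : μ S ≠ ⊤ := measure_ne_top μ S
  have hεpos : 0 < ε := ENNReal.toReal_pos hn hSfin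
  -- the constants
  refine ⟨2 / Real.pi ^ 2 * a ^ 2 * ε, by positivity, A⁻¹, by positivity, ?_⟩
  intro t ht
  set c₀ : ℝ := 2 / Real.pi ^ 2 * a ^ 2 * ε with hc₀
  -- Step 3: |φ(t)|² = ∫ cos(t (ξω - ξω')) dμ
  have hint : Integrable (fun ω => Complex.exp ((t:ℂ) * (ξ ω :ℂ) * Complex.I)) P := by
    apply Integrable.mono' (integrable_const 1)
    · exact (Complex.measurable_exp.comp (by fun_prop)).aestronglyMeasurable
    · filter_upwards with ω
      have : (t:ℂ) * (ξ ω :ℂ) * Complex.I = ((t * ξ ω : ℝ):ℂ) * Complex.I := by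
        push_cast; ring
      rw [this]
      simp [Complex.norm_exp]
  have hrw : ∀ ω, (t:ℂ) * (ξ ω :ℂ) * Complex.I = ((t * ξ ω : ℝ):ℂ) * Complex.I := by
    intro ω; push_cast; ring
  have hre : (∫ ω, Complex.exp ((t:ℂ) * (ξ ω :ℂ) * Complex.I) ∂P).re
      = ∫ ω, Real.cos (t * ξ ω) ∂P := by
    rw [← RCLike.re_to_complex, ← integral_re hint]
    congr 1; ext ω
    simp only [RCLike.re_to_complex]
    rw [hrw ω, Complex.exp_ofReal_mul_I_re]
  have him : (∫ ω, Complex.exp ((t:ℂ) * (ξ ω :ℂ) * Complex.I) ∂P).im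
      = ∫ ω, Real.sin (t * ξ ω) ∂P := by
    rw [← RCLike.im_to_complex, ← integral_im hint]
    congr 1; ext ω
    simp only [RCLike.im_to_complex]
    rw [hrw ω, Complex.exp_ofReal_mul_I_im]
  have hicos : Integrable (fun ω => Real.cos (t * ξ ω)) P :=
    aux_bdd_integrable P _ (by fun_prop) (fun ω => Real.abs_cos_le_one _)
  have hisin : Integrable (fun ω => Real.sin (t * ξ ω)) P :=
    aux_bdd_integrable P _ (by fun_prop) (fun ω => Real.abs_sin_le_one _)
  have hicc : Integrable (fun p : Ω × Ω => Real.cos (t * ξ p.1) * Real.cos (t * ξ p.2)) μ :=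
    aux_bdd_integrable μ _ (by fun_prop) (fun p => by
      rw [abs_mul]
      calc |Real.cos (t * ξ p.1)| * |Real.cos (t * ξ p.2)| ≤ 1 * 1 :=
        mul_le_mul (Real.abs_cos_le_one _) (Real.abs_cos_le_one _) (abs_nonneg _) zero_le_one
      _ = 1 := one_mul 1)
  have hiss : Integrable (fun p : Ω × Ω => Real.sin (t * ξ p.1) * Real.sin (t * ξ p.2)) μ :=
    aux_bdd_integrable μ _ (by fun_prop) (fun p => by
      rw [abs_mul]
      calc |Real.sin (t * ξ p.1)| * |Real.sin (t * ξ p.2)| ≤ 1 * 1 :=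
        mul_le_mul (Real.abs_sin_le_one _) (Real.abs_sin_le_one _) (abs_nonneg _) zero_le_one
      _ = 1 := one_mul 1)
  have key : (‖∫ ω, Complex.exp ((t : ℂ) * (ξ ω : ℂ) * Complex.I) ∂P‖) ^ 2
      = ∫ p, Real.cos (t * (ξ p.1 - ξ p.2)) ∂μ := by
    rw [Complex.sq_norm, Complex.normSq_apply, hre, him]
    have h1 : (∫ ω, Real.cos (t * ξ ω) ∂P) * (∫ ω, Real.cos (t * ξ ω) ∂P)
        = ∫ p, Real.cos (t * ξ p.1) * Real.cos (t * ξ p.2) ∂μ :=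
      (integral_prod_mul (μ := P) (ν := P) (fun ω => Real.cos (t * ξ ω))
        (fun ω => Real.cos (t * ξ ω))).symm
    have h2 : (∫ ω, Real.sin (t * ξ ω) ∂P) * (∫ ω, Real.sin (t * ξ ω) ∂P)
        = ∫ p, Real.sin (t * ξ p.1) * Real.sin (t * ξ p.2) ∂μ :=
      (integral_prod_mul (μ := P) (ν := P) (fun ω => Real.sin (t * ξ ω))
        (fun ω => Real.sin (t * ξ ω))).symm
    rw [h1, h2, ← integral_add hicc hiss]
    congr 1; ext p
    rw [show t * (ξ p.1 - ξ p.2) = t * ξ p.1 - t * ξ p.2 by ring, Real.cos_sub]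
  -- Step 4: estimate the integral of the cosine
  have hicosD : Integrable (fun p : Ω × Ω => Real.cos (t * (ξ p.1 - ξ p.2))) μ :=
    aux_bdd_integrable μ _ (by fun_prop) (fun p => Real.abs_cos_le_one _)
  have hbound : ∫ p, Real.cos (t * (ξ p.1 - ξ p.2)) ∂μ ≤ 1 - c₀ * t ^ 2 := by
    have hπ : (0:ℝ) < Real.pi := Real.pi_pos
    have hsplit : ∫ p, Real.cos (t * (ξ p.1 - ξ p.2)) ∂μ
        = (∫ p in S, Real.cos (t * (ξ p.1 - ξ p.2)) ∂μ)
          + ∫ p in Sᶜ, Real.cos (t * (ξ p.1 - ξ p.2)) ∂μ :=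
      (integral_add_compl hSmeas hicosD).symm
    have hon : ∫ p in S, Real.cos (t * (ξ p.1 - ξ p.2)) ∂μ
        ≤ ε * (1 - 2 / Real.pi ^ 2 * a ^ 2 * t ^ 2) := by
      have hmono : ∫ p in S, Real.cos (t * (ξ p.1 - ξ p.2)) ∂μ
          ≤ ∫ _ in S, (1 - 2 / Real.pi ^ 2 * a ^ 2 * t ^ 2) ∂μ := by
        apply setIntegral_mono_on hicosD.integrableOn (integrable_const _) hSmeas
        intro p hp
        obtain ⟨hp1, hp2⟩ := hp
        have habs : |t * (ξ p.1 - ξ p.2)| ≤ 1 := by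
          rw [abs_mul]
          calc |t| * |ξ p.1 - ξ p.2| ≤ A⁻¹ * A :=
            mul_le_mul ht hp2 (abs_nonneg _) (by positivity)
          _ = 1 := inv_mul_cancel₀ hApos.ne'
        have hπ1 : (1:ℝ) ≤ Real.pi := by linarith [Real.pi_gt_three]
        have hcos := Real.cos_le_one_sub_mul_cos_sq (le_trans habs hπ1)
        have hsq : a ^ 2 * t ^ 2 ≤ (t * (ξ p.1 - ξ p.2)) ^ 2 := by
          have h1 : a ^ 2 ≤ (ξ p.1 - ξ p.2) ^ 2 := by
            have := sq_abs (ξ p.1 - ξ p.2)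
            nlinarith [abs_nonneg (ξ p.1 - ξ p.2)]
          nlinarith [sq_nonneg t]
        have hc : (0:ℝ) < 2 / Real.pi ^ 2 := by positivity
        nlinarith
      calc ∫ p in S, Real.cos (t * (ξ p.1 - ξ p.2)) ∂μ
          ≤ ∫ _ in S, (1 - 2 / Real.pi ^ 2 * a ^ 2 * t ^ 2) ∂μ := hmono
        _ = ε * (1 - 2 / Real.pi ^ 2 * a ^ 2 * t ^ 2) := by
            rw [setIntegral_const]; simp [hε, smul_eq_mul, Measure.real]
    have hoff : ∫ p in Sᶜ, Real.cos (t * (ξ p.1 - ξ p.2)) ∂μ ≤ (μ Sᶜ).toReal := by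
      calc ∫ p in Sᶜ, Real.cos (t * (ξ p.1 - ξ p.2)) ∂μ ≤ ∫ _ in Sᶜ, (1:ℝ) ∂μ := by
            apply setIntegral_mono_on hicosD.integrableOn (integrable_const _) hSmeas.compl
            intro p _; exact Real.cos_le_one _
        _ = (μ Sᶜ).toReal := by rw [setIntegral_const]; simp [Measure.real]
    have hsum : ε + (μ Sᶜ).toReal = 1 := by
      rw [hε, ← ENNReal.toReal_add hSfin (measure_ne_top μ Sᶜ),
        measure_add_measure_compl hSmeas]
      simp
    rw [hsplit, hc₀]
    nlinarith [hon, hoff]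
  have hexp : 1 - c₀ * t ^ 2 ≤ Real.exp (-c₀ * t ^ 2) := by
    have := Real.add_one_le_exp (-c₀ * t ^ 2)
    linarith
  rw [key]
  linarith
end

section
/- Let g be a random entire function such that E[max_{|z| ≤ 2R} |g''(z)|] < ∞ for each R, g(w) is a non-degenerate complex Gaussian for each w, and sup_{|w| ≤ 2R} P(|g(w)| ≤ s) = O_R(s²) as s → 0. Then for every R > 0 and ε > 0, with probability at least 1 − ε, g has no zero of multiplicity ≥ 2 in the disk {|z| ≤ R}. -/
open MeasureTheory ProbabilityTheory Complex Metric

lemma taylor_bound_aux (h : ℂ → ℂ) (hd : Differentiable ℂ h) {R δ K : ℝ}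
    (hR : 0 < R) (hδ : 0 < δ) (hδR : δ ≤ R) {z₀ : ℂ} (hz₀ : ‖z₀‖ ≤ R)
    (h0 : h z₀ = 0) (h1 : deriv h z₀ = 0)
    (hK : ∀ u ∈ closedBall (0:ℂ) (2*R), ‖iteratedDeriv 2 h u‖ ≤ K) :
    ∀ w ∈ closedBall z₀ δ, ‖h w‖ ≤ K * δ ^ 2 := by
  have hsub : closedBall z₀ δ ⊆ closedBall (0:ℂ) (2*R) := by
    intro u hu
    simp only [mem_closedBall, dist_eq_norm] at hu ⊢
    calc ‖u - 0‖ = ‖(u - z₀) + z₀‖ := by ring_nf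
      _ ≤ ‖u - z₀‖ + ‖z₀‖ := norm_add_le _ _
      _ ≤ δ + R := add_le_add hu hz₀
      _ ≤ 2 * R := by linarith
  have hd' : Differentiable ℂ (deriv h) :=
    (contDiff_infty_iff_deriv.mp hd.contDiff).2.differentiable (by simp)
  have hz₀' : z₀ ∈ closedBall z₀ δ := mem_closedBall_self hδ.le
  have hK0 : 0 ≤ K := le_trans (norm_nonneg _) (hK 0 (mem_closedBall_self (by positivity)))
  have step1 : ∀ u ∈ closedBall z₀ δ, ‖deriv h u‖ ≤ K * δ := by
    intro u hu
    have := (convex_closedBall z₀ δ).norm_image_sub_le_of_norm_fderiv_le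
      (f := deriv h) (fun x _ => hd' x)
      (C := K) (fun x hx => by
        rw [← norm_deriv_eq_norm_fderiv]
        have h2 : deriv (deriv h) x = iteratedDeriv 2 h x := by
          rw [iteratedDeriv_succ, iteratedDeriv_one]
        rw [h2]
        exact hK x (hsub hx)) hz₀' hu
    rw [h1, sub_zero] at this
    calc ‖deriv h u‖ ≤ K * ‖u - z₀‖ := this
      _ ≤ K * δ := by
        have : ‖u - z₀‖ ≤ δ := by simpa [dist_eq_norm] using hu
        exact mul_le_mul_of_nonneg_left this hK0
  intro w hw
  have := (convex_closedBall z₀ δ).norm_image_sub_le_of_norm_fderiv_le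
    (f := h) (fun x _ => hd x)
    (C := K * δ) (fun x hx => by
      rw [← norm_deriv_eq_norm_fderiv]; exact step1 x hx) hz₀' hw
  rw [h0, sub_zero] at this
  have hwz : ‖w - z₀‖ ≤ δ := by simpa [dist_eq_norm] using hw
  calc ‖h w‖ ≤ K * δ * ‖w - z₀‖ := this
    _ ≤ K * δ * δ := mul_le_mul_of_nonneg_left hwz (mul_nonneg hK0 hδ.le)
    _ = K * δ ^ 2 := by ring


/-- Quantitative simplicity of zeros: if `g` is a random entire function with
`E[max_{|z| ≤ 2R} |g''(z)|] < ∞` for every `R`, `g(w)` is a non-degenerate complex Gaussian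
for each `w`, and `sup_{|w| ≤ 2R} P(|g(w)| ≤ s) = O_R(s²)` as `s → 0`, then for every `R > 0`
and `ε > 0`, with probability at least `1 − ε` the function `g` has no zero of
multiplicity `≥ 2` in `{|z| ≤ R}`. -/
theorem no_double_zeros_with_high_probability
    {Ω : Type*} [MeasurableSpace Ω] (P : Measure Ω) [IsProbabilityMeasure P]
    (g : Ω → ℂ → ℂ)
    (hmeas : ∀ z, Measurable (fun ω => g ω z))
    (hentire : ∀ᵐ ω ∂P, Differentiable ℂ (g ω))
    (hsecond : ∀ R : ℝ, 0 < R →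
      Integrable (fun ω => ⨆ z ∈ Metric.closedBall (0:ℂ) (2 * R), ‖iteratedDeriv 2 (g ω) z‖) P)
    -- `g(w)` is a non-degenerate complex Gaussian for each `w`
    (hgauss : ∀ w : ℂ, ∃ v : NNReal, 0 < v ∧
      P.map (fun ω => (g ω w).re) = gaussianReal 0 v ∧
      P.map (fun ω => (g ω w).im) = gaussianReal 0 v)
    -- small ball estimate, uniformly on compacts: `P(|g(w)| ≤ s) = O_R(s²)`
    (hsmall : ∀ R : ℝ, 0 < R → ∃ C : ℝ, 0 < C ∧ ∀ s : ℝ, 0 < s → s ≤ 1 →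
      ∀ w ∈ Metric.closedBall (0:ℂ) (2 * R),
        P {ω | ‖g ω w‖ ≤ s} ≤ ENNReal.ofReal (C * s ^ 2)) :
    ∀ R : ℝ, 0 < R → ∀ ε : ℝ, 0 < ε →
      1 - ENNReal.ofReal ε ≤
        P {ω | ∀ z ∈ Metric.closedBall (0:ℂ) R, ¬(g ω z = 0 ∧ deriv (g ω) z = 0)} := by
  classical
  intro R hR ε hε
  set G : Set Ω :=
    {ω | ∀ z ∈ Metric.closedBall (0:ℂ) R, ¬(g ω z = 0 ∧ deriv (g ω) z = 0)} with hG
  suffices hBad : P Gᶜ = 0 by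
    have h1 : (1:ENNReal) ≤ P G := by
      have h2 := measure_union_le (μ := P) G Gᶜ
      rwa [Set.union_compl_self, measure_univ, hBad, add_zero] at h2
    exact le_trans tsub_le_self h1
  -- modification of g on a null set
  obtain ⟨N, hNsub, hNm, hN0⟩ :=
    exists_measurable_superset_of_null (ae_iff.mp hentire)
  set g' : Ω → ℂ → ℂ := fun ω z => if ω ∈ N then 0 else g ω z with hg'
  have hg'eq : ∀ ω, ω ∉ N → g' ω = g ω := by
    intro ω hω; funext z; simp [hg', hω]
  have hg'meas : ∀ z, Measurable fun ω => g' ω z := fun z =>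
    Measurable.ite hNm measurable_const (hmeas z)
  have hg'diff : ∀ ω, Differentiable ℂ (g' ω) := by
    intro ω
    by_cases hω : ω ∈ N
    · have : g' ω = fun _ => (0:ℂ) := by funext z; simp [hg', hω]
      rw [this]; exact differentiable_const 0
    · rw [hg'eq ω hω]
      by_contra hc
      exact hω (hNsub hc)
  -- joint measurability
  have hum : Measurable (Function.uncurry fun (z : ℂ) (ω : Ω) => g' ω z) :=
    measurable_uncurry_of_continuous_of_measurable
      (fun ω => (hg'diff ω).continuous) (fun z => hg'meas z)
  have hum' : Measurable (fun p : Ω × ℂ => g' p.1 p.2) := by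
    have : (fun p : Ω × ℂ => g' p.1 p.2) =
        (Function.uncurry fun (z : ℂ) (ω : Ω) => g' ω z) ∘ Prod.swap := rfl
    rw [this]; exact hum.comp measurable_swap
  -- bad events
  set Bad' : Set Ω :=
    {ω | ∃ z ∈ Metric.closedBall (0:ℂ) R, g' ω z = 0 ∧ deriv (g' ω) z = 0} with hBad'
  have hGc : Gᶜ ⊆ Bad' ∪ N := by
    intro ω hω
    by_cases hN : ω ∈ N
    · exact Or.inr hN
    · left
      simp only [hG, Set.mem_compl_iff, Set.mem_setOf_eq, not_forall] at hω
      obtain ⟨z, hz, hzz⟩ := hω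
      rw [not_not] at hzz
      exact ⟨z, hz, by rwa [hg'eq ω hN]⟩
  have hGle : P Gᶜ ≤ P Bad' := by
    have h3 : P Gᶜ ≤ P Bad' + P N := le_trans (measure_mono hGc) (measure_union_le _ _)
    rwa [hN0, add_zero] at h3
  suffices hB : P Bad' = 0 by exact le_antisymm (hGle.trans hB.le) zero_le
  -- decompose according to the bound on the second derivative
  set A : ℕ → Set Ω := fun k =>
    {ω | ω ∈ Bad' ∧ ∀ u ∈ Metric.closedBall (0:ℂ) (2*R), ‖iteratedDeriv 2 (g' ω) u‖ ≤ k} with hA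
  have hcover : Bad' ⊆ ⋃ k, A k := by
    intro ω hω
    have hcont : Continuous (iteratedDeriv 2 (g' ω)) :=
      ((hg'diff ω).contDiff : ContDiff ℂ 2 (g' ω)).continuous_iteratedDeriv 2 (le_refl _)
    obtain ⟨C₀, hC₀⟩ := (isCompact_closedBall (0:ℂ) (2*R)).exists_bound_of_continuousOn
      hcont.continuousOn
    refine Set.mem_iUnion.mpr ⟨⌈C₀⌉₊, hω, fun u hu => ?_⟩
    exact (hC₀ u hu).trans (Nat.le_ceil C₀)
  have hAzero : ∀ k : ℕ, P (A k) = 0 := by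
    obtain ⟨C, hC, hCs⟩ := hsmall R hR
    intro k
    have hk1 : (0:ℝ) < (k:ℝ) + 1 := by positivity
    have key : ∀ η : ℝ, 0 < η → P (A k) ≤ ENNReal.ofReal η := by
      intro η hη
      set D : ℝ := 4 * R^2 * C * ((k:ℝ)+1)^2 with hD
      have hD0 : 0 < D := by positivity
      set δ : ℝ := min (min R (1/((k:ℝ)+1))) (Real.sqrt (η / D)) with hδdef
      have hδ : 0 < δ :=
        lt_min (lt_min hR (by positivity)) (Real.sqrt_pos.mpr (by positivity))
      have hδR : δ ≤ R := le_trans (min_le_left _ _) (min_le_left _ _)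
      have hδk : δ ≤ 1/((k:ℝ)+1) := le_trans (min_le_left _ _) (min_le_right _ _)
      have hδη : D * δ^2 ≤ η := by
        have h1 : δ ≤ Real.sqrt (η / D) := min_le_right _ _
        have h2 : δ^2 ≤ η / D := by
          calc δ^2 ≤ Real.sqrt (η/D)^2 := by nlinarith [Real.sqrt_nonneg (η/D)]
            _ = η / D := Real.sq_sqrt (by positivity)
        calc D * δ^2 ≤ D * (η/D) := mul_le_mul_of_nonneg_left h2 hD0.le
          _ = η := by field_simp
      set s : ℝ := ((k:ℝ)+1) * δ^2 with hs
      have hs0 : 0 < s := by positivity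
      have hs1 : s ≤ 1 := by
        have hδ1 : δ ≤ 1 := hδk.trans (by rw [div_le_one hk1]; simp)
        calc s = ((k:ℝ)+1) * δ * δ := by rw [hs]; ring
          _ ≤ ((k:ℝ)+1) * (1/((k:ℝ)+1)) * 1 := by
              apply mul_le_mul _ hδ1 hδ.le (by positivity)
              exact mul_le_mul_of_nonneg_left hδk (by positivity)
          _ = 1 := by field_simp
      set ν := volume.restrict (Metric.closedBall (0:ℂ) (2*R)) with hν
      set S : Set (Ω × ℂ) := {p | ‖g' p.1 p.2‖ ≤ s} with hS
      have hSm : MeasurableSet S := measurableSet_le (hum'.norm) measurable_const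
      set F : Ω → ENNReal := fun ω => ν (Prod.mk ω ⁻¹' S) with hF
      have hFm : Measurable F := measurable_measure_prodMk_left (ν := ν) hSm
      have hincl : A k ⊆ {ω | ENNReal.ofReal (Real.pi * δ^2) ≤ F ω} := by
        intro ω hω
        obtain ⟨⟨z₀, hz₀, hg0, hg1⟩, hbound⟩ := hω
        have hz₀R : ‖z₀‖ ≤ R := by simpa [dist_eq_norm] using hz₀
        have htb := taylor_bound_aux (g' ω) (hg'diff ω) hR hδ hδR hz₀R hg0 hg1
          (K := (k:ℝ)) hbound
        have hsubset : Metric.closedBall z₀ δ ⊆ Prod.mk ω ⁻¹' S := by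
          intro w hw
          refine le_trans (htb w hw) ?_
          rw [hs]; nlinarith [sq_nonneg δ]
        have hsub2R : Metric.closedBall z₀ δ ⊆ Metric.closedBall (0:ℂ) (2*R) := by
          intro u hu
          simp only [Metric.mem_closedBall, dist_eq_norm] at hu ⊢
          calc ‖u - 0‖ = ‖(u - z₀) + z₀‖ := by ring_nf
            _ ≤ ‖u - z₀‖ + ‖z₀‖ := norm_add_le _ _
            _ ≤ δ + R := add_le_add hu hz₀R
            _ ≤ 2 * R := by linarith
        have hvol : ENNReal.ofReal (Real.pi * δ^2) = volume (Metric.closedBall z₀ δ) := by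
          rw [Complex.volume_closedBall, ← ENNReal.ofReal_pow hδ.le,
            ← ENNReal.ofReal_coe_nnreal, ← ENNReal.ofReal_mul (by positivity)]
          congr 1
          rw [NNReal.coe_real_pi]; ring
        rw [Set.mem_setOf_eq, hvol]
        have hre : volume (Metric.closedBall z₀ δ) = ν (Metric.closedBall z₀ δ) := by
          rw [hν, Measure.restrict_apply' measurableSet_closedBall,
            Set.inter_eq_self_of_subset_left hsub2R]
        rw [hre]
        exact measure_mono hsubset
      have markov := mul_meas_ge_le_lintegral₀ (μ := P) hFm.aemeasurable (ENNReal.ofReal (Real.pi * δ^2))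
      have hPA : ENNReal.ofReal (Real.pi * δ^2) * P (A k) ≤ ∫⁻ ω, F ω ∂P :=
        le_trans (mul_le_mul_right (measure_mono hincl) _) markov
      have fubini : ∫⁻ ω, F ω ∂P
          ≤ ENNReal.ofReal (C * s^2) * (ENNReal.ofReal (2*R)^2 * NNReal.pi) := by
        have h1 : ∫⁻ ω, F ω ∂P = (P.prod ν) S := (Measure.prod_apply hSm).symm
        rw [h1, Measure.prod_apply_symm hSm]
        have h2 : ∀ w ∈ Metric.closedBall (0:ℂ) (2*R),
            P ((fun ω => (ω, w)) ⁻¹' S) ≤ ENNReal.ofReal (C * s^2) := by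
          intro w hw
          have hsub : ((fun ω => (ω, w)) ⁻¹' S) ⊆ {ω | ‖g ω w‖ ≤ s} ∪ N := by
            intro ω hω
            by_cases hN : ω ∈ N
            · exact Or.inr hN
            · left
              have : ‖g' ω w‖ ≤ s := hω
              rwa [hg'eq ω hN] at this
          calc P _ ≤ P ({ω | ‖g ω w‖ ≤ s} ∪ N) := measure_mono hsub
            _ ≤ P {ω | ‖g ω w‖ ≤ s} + P N := measure_union_le _ _
            _ = P {ω | ‖g ω w‖ ≤ s} := by rw [hN0, add_zero]
            _ ≤ ENNReal.ofReal (C * s^2) := hCs s hs0 hs1 w hw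
        calc ∫⁻ w, P ((fun ω => (ω, w)) ⁻¹' S) ∂ν
            ≤ ∫⁻ w in Metric.closedBall (0:ℂ) (2*R), ENNReal.ofReal (C * s^2) ∂volume := by
              rw [hν]
              exact setLIntegral_mono' measurableSet_closedBall h2
          _ = ENNReal.ofReal (C * s^2) * volume (Metric.closedBall (0:ℂ) (2*R)) := by
              rw [setLIntegral_const]
          _ = _ := by rw [Complex.volume_closedBall]
      have final : ENNReal.ofReal (Real.pi * δ^2) * P (A k)
          ≤ ENNReal.ofReal (Real.pi * δ^2) * ENNReal.ofReal η := by
        refine le_trans (hPA.trans fubini) ?_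
        have hrw : ENNReal.ofReal (C * s^2) * (ENNReal.ofReal (2*R)^2 * NNReal.pi)
            = ENNReal.ofReal (C * s^2 * ((2*R)^2 * Real.pi)) := by
          rw [← ENNReal.ofReal_pow (by positivity), ← ENNReal.ofReal_coe_nnreal,
            NNReal.coe_real_pi, ← ENNReal.ofReal_mul (by positivity),
            ← ENNReal.ofReal_mul (by positivity)]
        rw [hrw, ← ENNReal.ofReal_mul (by positivity)]
        apply ENNReal.ofReal_le_ofReal
        have hring : C * s^2 * ((2*R)^2 * Real.pi) = Real.pi * δ^2 * (D * δ^2) := by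
          rw [hs, hD]; ring
        rw [hring]
        exact mul_le_mul_of_nonneg_left hδη (by positivity)
      have hne : ENNReal.ofReal (Real.pi * δ^2) ≠ 0 :=
        (ENNReal.ofReal_pos.mpr (by positivity)).ne'
      exact (ENNReal.mul_le_mul_iff_right hne ENNReal.ofReal_ne_top).mp final
    refine le_antisymm ?_ zero_le
    refine ENNReal.le_of_forall_pos_le_add fun r hr _ => ?_
    have := key r hr
    rw [ENNReal.ofReal_coe_nnreal] at this
    simpa using this
  refine le_antisymm ?_ zero_le
  calc P Bad' ≤ P (⋃ k, A k) := measure_mono hcover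
    _ ≤ ∑' k, P (A k) := measure_iUnion_le _
    _ ≤ 0 := by simp [hAzero]
end
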